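/- Let S be a simple right A-module. Then Hom_A(S,A) ≠ 0 if and only if there exists a perfect exact sequence 0 → S → P → Z → 0 of finitely generated right A-modules with P projective. -/
import Mathlib

/-- `0 → X → Y → Z → 0` is a short exact sequence of right `A`-modules
(right `A`-modules are modules over `Aᵐᵒᵖ`). -/
def IsShortExactSeq (A : Type) [Ring A] {X Y Z : Type}
    [AddCommGroup X] [AddCommGroup Y] [AddCommGroup Z]
    [Module Aᵐᵒᵖ X] [Module Aᵐᵒᵖ Y] [Module Aᵐᵒᵖ Z]
    (f : X →ₗ[Aᵐᵒᵖ] Y) (g : Y →ₗ[Aᵐᵒᵖ] Z) : Prop :=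
  Function.Injective f ∧ Function.Exact f g ∧ Function.Surjective g

/-- A short exact sequence `0 → X → Y → Z → 0` of right `A`-modules is perfect exact
if the induced sequence `0 → Hom_A(Z,A) → Hom_A(Y,A) → Hom_A(X,A) → 0` is exact. -/
def IsPerfectExactSeq (A : Type) [Ring A] {X Y Z : Type}
    [AddCommGroup X] [AddCommGroup Y] [AddCommGroup Z]
    [Module Aᵐᵒᵖ X] [Module Aᵐᵒᵖ Y] [Module Aᵐᵒᵖ Z]
    (f : X →ₗ[Aᵐᵒᵖ] Y) (g : Y →ₗ[Aᵐᵒᵖ] Z) : Prop :=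
  IsShortExactSeq A f g ∧
  Function.Injective (fun φ : Z →ₗ[Aᵐᵒᵖ] A => φ.comp g) ∧
  Function.Exact (fun φ : Z →ₗ[Aᵐᵒᵖ] A => φ.comp g) (fun φ : Y →ₗ[Aᵐᵒᵖ] A => φ.comp f) ∧
  Function.Surjective (fun φ : Y →ₗ[Aᵐᵒᵖ] A => φ.comp f)

/-- `A` is linearly equivalent to `Aᵐᵒᵖ` as a right `A`-module. -/
noncomputable def unopEquiv (A : Type) [Ring A] : Aᵐᵒᵖ ≃ₗ[Aᵐᵒᵖ] A where
  toFun := MulOpposite.unop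
  invFun := MulOpposite.op
  map_add' _ _ := rfl
  map_smul' a x := by simp [MulOpposite.smul_eq_mul_unop]
  left_inv _ := rfl
  right_inv _ := rfl

instance (A : Type) [Ring A] : Module.Free Aᵐᵒᵖ A := Module.Free.of_equiv (unopEquiv A)
instance (A : Type) [Ring A] : Module.Finite Aᵐᵒᵖ A := Module.Finite.equiv (unopEquiv A)

/-- `Hom_A(S,A) ≠ 0` for a simple right `A`-module `S` if and only if there exists a
perfect exact sequence `0 → S → P → Z → 0` of finitely generated right `A`-modules
with `P` projective. -/
theorem simple_hom_ne_zero_iff_exists_perfectExact_into_projective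
    (k A : Type) [Field k] [Ring A] [Algebra k A] [FiniteDimensional k A]
    (S : Type) [AddCommGroup S] [Module Aᵐᵒᵖ S] [Module.Finite Aᵐᵒᵖ S]
    (hS : IsSimpleModule Aᵐᵒᵖ S) :
    (∃ φ : S →ₗ[Aᵐᵒᵖ] A, φ ≠ 0) ↔
      (∃ (P Z : Type) (_ : AddCommGroup P) (_ : AddCommGroup Z)
        (_ : Module Aᵐᵒᵖ P) (_ : Module Aᵐᵒᵖ Z),
        Module.Finite Aᵐᵒᵖ P ∧ Module.Finite Aᵐᵒᵖ Z ∧ Module.Projective Aᵐᵒᵖ P ∧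
        ∃ (f : S →ₗ[Aᵐᵒᵖ] P) (g : P →ₗ[Aᵐᵒᵖ] Z), IsPerfectExactSeq A f g) := by
  have := IsSimpleModule.nontrivial Aᵐᵒᵖ S
  -- a nonzero hom from a simple module killing a nonzero element is zero
  have key : ∀ (φ : S →ₗ[Aᵐᵒᵖ] A) (s : S), s ≠ 0 → φ s = 0 → φ = 0 := by
    intro φ s hs hφs
    rcases eq_bot_or_eq_top (LinearMap.ker φ) with h | h
    · exact absurd (h ▸ (LinearMap.mem_ker.mpr hφs)) (by simpa using hs)
    · exact LinearMap.ker_eq_top.mp h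
  constructor
  · rintro ⟨φ₀, hφ₀⟩
    obtain ⟨s₀, hs₀⟩ := exists_ne (0 : S)
    -- Hom_A(S, A) is a finite-dimensional k-vector space
    have hev : Function.Injective
        (fun φ : S →ₗ[Aᵐᵒᵖ] A => φ s₀) := by
      intro φ ψ h
      have : φ - ψ = 0 := key _ s₀ hs₀ (by simp only [LinearMap.sub_apply, h, sub_self])
      exact sub_eq_zero.mp this
    have hfd : FiniteDimensional k (S →ₗ[Aᵐᵒᵖ] A) :=
      FiniteDimensional.of_injective
        ({ toFun := fun φ : S →ₗ[Aᵐᵒᵖ] A => φ s₀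
           map_add' := fun _ _ => rfl
           map_smul' := fun _ _ => rfl } : (S →ₗ[Aᵐᵒᵖ] A) →ₗ[k] A) hev
    obtain ⟨n, φv, hspan⟩ := Module.Finite.exists_fin (R := k) (M := S →ₗ[Aᵐᵒᵖ] A)
    set f : S →ₗ[Aᵐᵒᵖ] (Fin n → A) := LinearMap.pi φv with hf
    have hfinj : Function.Injective f := by
      intro s t hst
      by_contra hne
      have hu : s - t ≠ 0 := sub_ne_zero.mpr hne
      -- every φ in the span kills s - t
      have hker : ∀ φ : S →ₗ[Aᵐᵒᵖ] A, φ (s - t) = 0 := by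
        have hle : Submodule.span k (Set.range φv) ≤ LinearMap.ker
            ({ toFun := fun φ : S →ₗ[Aᵐᵒᵖ] A => φ (s - t)
               map_add' := fun _ _ => rfl
               map_smul' := fun _ _ => rfl } : (S →ₗ[Aᵐᵒᵖ] A) →ₗ[k] A) := by
          rw [Submodule.span_le]
          rintro _ ⟨i, rfl⟩
          have : φv i s = φv i t := congrFun hst i
          simp [LinearMap.mem_ker, map_sub, this]
        intro φ
        have : φ ∈ Submodule.span k (Set.range φv) := hspan ▸ Submodule.mem_top
        exact hle this
      exact hφ₀ (key φ₀ (s - t) hu (hker φ₀))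
    set Z := (Fin n → A) ⧸ LinearMap.range f with hZ
    set g : (Fin n → A) →ₗ[Aᵐᵒᵖ] Z := (LinearMap.range f).mkQ with hg
    refine ⟨Fin n → A, Z, inferInstance, inferInstance, inferInstance, inferInstance,
      inferInstance, Module.Finite.quotient Aᵐᵒᵖ _, inferInstance, f, g,
      ⟨hfinj, ?_, Submodule.mkQ_surjective _⟩, ?_, ?_, ?_⟩
    · rw [LinearMap.exact_iff, hg, Submodule.ker_mkQ]
    · intro φ ψ h
      exact Submodule.linearMap_qext _ h
    · intro ψ
      constructor
      · intro h
        have hle : LinearMap.range f ≤ LinearMap.ker ψ := by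
          rintro _ ⟨s, rfl⟩
          exact LinearMap.congr_fun h s
        exact ⟨(LinearMap.range f).liftQ ψ hle, Submodule.liftQ_mkQ _ _ _⟩
      · rintro ⟨φ, rfl⟩
        ext s
        have : g (f s) = 0 := by
          rw [hg, Submodule.mkQ_apply]
          exact (Submodule.Quotient.mk_eq_zero _).mpr ⟨s, rfl⟩
        simp [LinearMap.comp_apply, this]
    · intro χ
      have hχ : χ ∈ Submodule.span k (Set.range φv) := hspan ▸ Submodule.mem_top
      obtain ⟨c, hc⟩ := (Submodule.mem_span_range_iff_exists_fun k).mp hχ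
      refine ⟨∑ i, c i • (LinearMap.proj i : (Fin n → A) →ₗ[Aᵐᵒᵖ] A), ?_⟩
      ext s
      have := LinearMap.congr_fun hc s
      simpa [LinearMap.sum_apply, LinearMap.smul_apply, hf] using this
  · rintro ⟨P, Z, _, _, _, _, hPfin, hZfin, hproj, f, g,
      ⟨⟨hfinj, _, _⟩, _, _, _⟩⟩
    obtain ⟨s₀, hs₀⟩ := exists_ne (0 : S)
    obtain ⟨sec, hsec⟩ := Module.projective_def'.mp hproj
    have hfs : f s₀ ≠ 0 := fun h => hs₀ (hfinj (by simpa using h))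
    have hsinj : sec (f s₀) ≠ 0 := by
      intro h
      apply hfs
      have := LinearMap.congr_fun hsec (f s₀)
      simpa [h] using this.symm
    obtain ⟨p, hp⟩ : ∃ p : P, sec (f s₀) p ≠ 0 := by
      by_contra h
      push_neg at h
      exact hsinj (Finsupp.ext h)
    refine ⟨((unopEquiv A).toLinearMap.comp ((Finsupp.lapply p).comp sec)).comp f, ?_⟩
    intro h
    have := LinearMap.congr_fun h s₀
    simp [unopEquiv] at this
    exact hp (by simpa using this)
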